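/- Inclusion of SCM marginals is a causal transformation: for an acyclic SCM on variables (X₁,…,X_d) with observational law ℙ on ℝ^d and S ⊆ [d], let 𝒞¹=(ℝ^{|S|}, ℬ(ℝ^{|S|}), ℙ^S, 𝕂) with ℙ^S the marginal on coordinates in S, and 𝒞²=(ℝ^d, ℬ(ℝ^d), ℙ, 𝕃) the full space, where 𝕂 is the marginalization of 𝕃 in the sense that K_{S'}(ω,A)=L_{S'}(ω,A) for all S'⊆S, ω, A∈ℬ(ℝ^{|S|}) (viewed inside ℬ(ℝ^d)). Define ρ: S ↪ [d] the inclusion and κ(ω,A) = ℙ_{ℋ¹}(ω,A), the conditional probability of A given the coordinates in S. Then (κ,ρ): 𝒞¹→𝒞² is a causal transformation: it is admissible, ∫κ(ω,A)ℙ^S(dω)=ℙ(A), and ∫K_{S'}(ω,dω')κ(ω',A) = ∫κ(ω,dω')L_{S'}(ω',A) for all S'⊆S, ω, A∈ℋ¹. -/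

import Mathlib

open MeasureTheory

/-- The sub-σ-algebra of the product σ-algebra generated by the coordinates in `S`. -/
def piH {T : Type*} (E : T → Type*) [∀ t, MeasurableSpace (E t)] (S : Set T) :
    MeasurableSpace (∀ t, E t) :=
  ⨆ t ∈ S, MeasurableSpace.comap (fun ω => ω t) inferInstance

lemma piH_le_pi {T : Type*} (E : T → Type*) [∀ t, MeasurableSpace (E t)] (S : Set T) :
    piH E S ≤ MeasurableSpace.pi := by
  refine iSup₂_le fun t _ => ?_
  exact le_iSup (fun t => MeasurableSpace.comap (fun ω : ∀ t, E t => ω t) inferInstance) t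

lemma piH_eq_comap {d : ℕ} (S S' : Set (Fin d)) (hS' : S' ⊆ S)
    (r : (Fin d → ℝ) → (S → ℝ)) (hr : r = fun ω i => ω i) :
    piH (fun _ : Fin d => ℝ) S' =
      MeasurableSpace.comap r (piH (fun _ : S => ℝ) (Subtype.val ⁻¹' S')) := by
  unfold piH
  simp_rw [MeasurableSpace.comap_iSup, MeasurableSpace.comap_comp]
  refine le_antisymm (iSup₂_le fun t ht => ?_) (iSup₂_le fun i hi => ?_)
  · refine le_trans ?_ (le_iSup₂ (⟨t, hS' ht⟩ : S) (by simpa using ht))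
    apply le_of_eq; congr 1; ext ω; simp [hr, Function.comp]
  · refine le_trans ?_ (le_iSup₂ i.val hi)
    apply le_of_eq; congr 1; ext ω; simp [hr, Function.comp]

lemma piH_univ_eq_pi {T : Type*} (E : T → Type*) [∀ t, MeasurableSpace (E t)] :
    piH E (Set.univ) = MeasurableSpace.pi := by
  unfold piH; rw [iSup_univ]; rfl

/-- Inclusion of SCM marginals is a causal transformation.  For an acyclic SCM
on `(X₁, …, X_d)` with observational law `ℙ` on `ℝ^d` and `S ⊆ [d]`, let `𝒞¹` be the causal
space on `ℝ^{|S|}` with the marginal `ℙ^S = r_*ℙ` (`r` the restriction to the coordinates in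
`S`) and causal mechanism `𝕂` the marginalization of the mechanism `𝕃` of the full space
`𝒞²` (`K_{S'}(r(ω), A) = L_{S'}(ω, r⁻¹(A))` for `S' ⊆ S`), and let `κ(·, A) = ℙ_{ℋ¹}(A)` be
(a pointwise-proper version of) the conditional probability of `ℙ` given the coordinates in
`S`, with `L_{S'}(·, A)` being `ℋ¹`-measurable for `A ∈ ℋ¹`.  Then `(κ, ρ)` with
`ρ : S ↪ [d]` the inclusion is a causal transformation `𝒞¹ → 𝒞²`: it is admissible,
distributionally consistent, and interventionally consistent. -/
theorem inclusion_of_scm_marginal_is_causal_transformation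
    {d : ℕ} (S : Set (Fin d))
    (P : Measure (Fin d → ℝ)) (hPprob : IsProbabilityMeasure P)
    (r : (Fin d → ℝ) → (S → ℝ)) (hr : r = fun ω i => ω i)
    (K : Set (Fin d) → (S → ℝ) → Measure (S → ℝ))
    (L : Set (Fin d) → (Fin d → ℝ) → Measure (Fin d → ℝ))
    (κ : (S → ℝ) → Measure (Fin d → ℝ))
    (hκprob : ∀ ω, IsProbabilityMeasure (κ ω))
    -- κ is a regular conditional probability of ℙ given ℋ¹ = σ(coordinates in S)
    (hκcond : ∀ A : Set (Fin d → ℝ), MeasurableSet A →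
      ∀ B : Set (S → ℝ), MeasurableSet B →
      ∫⁻ ω in B, κ ω A ∂(Measure.map r P) = P (A ∩ r ⁻¹' B))
    -- pointwise-proper version: κ(ω, A) = 𝟙_A(ω) for A ∈ ℋ¹
    (hκpoint : ∀ A : Set (S → ℝ), MeasurableSet A → ∀ ω : S → ℝ,
      κ ω (r ⁻¹' A) = A.indicator (fun _ => (1 : ENNReal)) ω)
    -- L_{S'}(·, A) is ℋ¹-measurable for S' ⊆ S and A ∈ ℋ¹
    (hLmeas : ∀ S' : Set (Fin d), S' ⊆ S → ∀ A : Set (S → ℝ), MeasurableSet A →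
      Measurable[piH (fun _ : Fin d => ℝ) S] fun ω => L S' ω (r ⁻¹' A))
    -- 𝕂 is the marginalization of 𝕃
    (hmarg : ∀ S' : Set (Fin d), S' ⊆ S → ∀ (ω : Fin d → ℝ) (A : Set (S → ℝ)),
      MeasurableSet A → K S' (r ω) A = L S' ω (r ⁻¹' A)) :
    -- admissibility
    (∀ S' : Set (Fin d), S' ⊆ S → ∀ A : Set (Fin d → ℝ),
      MeasurableSet[piH (fun _ : Fin d => ℝ) S'] A →
      Measurable[piH (fun _ : S => ℝ) (Subtype.val ⁻¹' S')] fun ω => κ ω A) ∧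
    -- distributional consistency: ∫ κ(ω, A) ℙ^S(dω) = ℙ(A)
    (∀ A : Set (Fin d → ℝ), MeasurableSet A →
      ∫⁻ ω, κ ω A ∂(Measure.map r P) = P A) ∧
    -- interventional consistency
    (∀ S' : Set (Fin d), S' ⊆ S → ∀ A : Set (S → ℝ), MeasurableSet A → ∀ ω : S → ℝ,
      ∫⁻ ω', κ ω' (r ⁻¹' A) ∂(K S' ω)
        = ∫⁻ ω₂, L S' ω₂ (r ⁻¹' A) ∂(κ ω)) := by
  classical
  set e : (S → ℝ) → (Fin d → ℝ) := fun ω i => if h : i ∈ S then ω ⟨i, h⟩ else 0 with he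
  have hre : ∀ ω, r (e ω) = ω := by
    intro ω; funext i; simp [hr, he, i.2]
  refine ⟨?_, ?_, ?_⟩
  · -- admissibility
    intro S' hS' A hA
    rw [piH_eq_comap S S' hS' r hr] at hA
    obtain ⟨B, hB, hBA⟩ := hA
    have hBfull : MeasurableSet B :=
      piH_le_pi (fun _ : S => ℝ) (Subtype.val ⁻¹' S') B hB
    have : (fun ω => κ ω A) = Set.indicator B (fun _ => (1 : ENNReal)) := by
      funext ω; rw [← hBA, hκpoint B hBfull ω]
    rw [this]
    exact measurable_const.indicator hB
  · -- distributional consistency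
    intro A hA
    have := hκcond A hA Set.univ MeasurableSet.univ
    simpa [Measure.restrict_univ] using this
  · -- interventional consistency
    intro S' hS' A hA ω
    have hpiS : piH (fun _ : Fin d => ℝ) S =
        MeasurableSpace.comap r MeasurableSpace.pi := by
      rw [piH_eq_comap S S (le_refl S) r hr]
      congr 1
      rw [← piH_univ_eq_pi (fun _ : S => ℝ)]
      congr 1
      ext i; simp [i.2]
    set f : (Fin d → ℝ) → ENNReal := fun ω₂ => L S' ω₂ (r ⁻¹' A) with hf
    have hfmeas : Measurable[MeasurableSpace.comap r MeasurableSpace.pi] f := by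
      rw [← hpiS]; exact hLmeas S' hS' A hA
    have hfib : ∀ a b, r a = r b → f a = f b := by
      intro a b hab
      have hs : MeasurableSet[MeasurableSpace.comap r MeasurableSpace.pi]
          (f ⁻¹' {f a}) := hfmeas (measurableSet_singleton (f a))
      obtain ⟨B, _, hB⟩ := hs
      have ha : a ∈ f ⁻¹' {f a} := rfl
      rw [← hB] at ha
      have hb : b ∈ r ⁻¹' B := by simpa [Set.mem_preimage, ← hab] using ha
      have hb2 : b ∈ f ⁻¹' {f a} := hB ▸ hb
      exact (hb2 : f b = f a).symm
    have hK : K S' ω A = f (e ω) := by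
      have h := hmarg S' hS' (e ω) A hA
      rwa [hre] at h
    have hLHS : ∫⁻ ω', κ ω' (r ⁻¹' A) ∂(K S' ω) = K S' ω A := by
      calc ∫⁻ ω', κ ω' (r ⁻¹' A) ∂(K S' ω)
          = ∫⁻ ω', A.indicator (fun _ => (1:ENNReal)) ω' ∂(K S' ω) := by
            apply lintegral_congr; intro ω'; exact hκpoint A hA ω'
        _ = K S' ω A := lintegral_indicator_one hA
    have hsupp : κ ω (r ⁻¹' {ω}ᶜ) = 0 := by
      have := hκpoint ({ω}ᶜ) (measurableSet_singleton ω).compl ω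
      simpa using this
    have hae : ∀ᵐ ω₂ ∂(κ ω), f ω₂ = f (e ω) := by
      have hmem : ∀ᵐ ω₂ ∂(κ ω), ω₂ ∈ r ⁻¹' {ω} := by
        rw [MeasureTheory.ae_iff]
        exact hsupp
      filter_upwards [hmem] with ω₂ h2
      have h3 : r ω₂ = ω := h2
      exact hfib ω₂ (e ω) (by rw [h3, hre])
    have hRHS : ∫⁻ ω₂, f ω₂ ∂(κ ω) = f (e ω) := by
      rw [lintegral_congr_ae hae, lintegral_const]
      rw [(hκprob ω).measure_univ, mul_one]
    rw [hLHS, hK, ← hRHS]
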